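/- Let H be a complex Hilbert space and let 𝒜 = [[A, B],[B*, D]] be a block operator matrix on H × H satisfying the basic assumptions with C = B*. Suppose B is closed with nonempty resolvent set ρ(B) and D(𝒜) = D(B*) × D(B) (i.e., D(B*) ⊆ D(A) and D(B) ⊆ D(D)). Then the induced operator 𝒜 is self-adjoint if one of the following holds: (a) A is B*-bounded with relative bound 0; (b) D is B-bounded with relative bound 0. -/

import Mathlib

open LinearPMap
open scoped LinearPMap

namespace BlockOp

variable {E F G X₁ X₂ Y₁ Y₂ : Type*}
  [AddCommGroup E] [Module ℂ E] [AddCommGroup F] [Module ℂ F] [AddCommGroup G] [Module ℂ G]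
  [AddCommGroup X₁] [Module ℂ X₁] [AddCommGroup X₂] [Module ℂ X₂]
  [AddCommGroup Y₁] [Module ℂ Y₁] [AddCommGroup Y₂] [Module ℂ Y₂]

/-- The operator on `X₁ × X₂` induced by a block operator matrix `[[A, B], [C, D]]`. -/
noncomputable def blockOp (A : X₁ →ₗ.[ℂ] Y₁) (B : X₂ →ₗ.[ℂ] Y₁)
    (C : X₁ →ₗ.[ℂ] Y₂) (D : X₂ →ₗ.[ℂ] Y₂) : (X₁ × X₂) →ₗ.[ℂ] (Y₁ × Y₂) where
  domain := (A.domain ⊓ C.domain).prod (B.domain ⊓ D.domain)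
  toFun := LinearMap.prod
    (A.toFun ∘ₗ Submodule.inclusion inf_le_left ∘ₗ
        (LinearMap.fst ℂ X₁ X₂).restrict
          (p := (A.domain ⊓ C.domain).prod (B.domain ⊓ D.domain))
          (q := A.domain ⊓ C.domain) (fun _ hx => hx.1)
      + B.toFun ∘ₗ Submodule.inclusion inf_le_left ∘ₗ
        (LinearMap.snd ℂ X₁ X₂).restrict
          (p := (A.domain ⊓ C.domain).prod (B.domain ⊓ D.domain))
          (q := B.domain ⊓ D.domain) (fun _ hx => hx.2))
    (C.toFun ∘ₗ Submodule.inclusion inf_le_right ∘ₗ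
        (LinearMap.fst ℂ X₁ X₂).restrict
          (p := (A.domain ⊓ C.domain).prod (B.domain ⊓ D.domain))
          (q := A.domain ⊓ C.domain) (fun _ hx => hx.1)
      + D.toFun ∘ₗ Submodule.inclusion inf_le_right ∘ₗ
        (LinearMap.snd ℂ X₁ X₂).restrict
          (p := (A.domain ⊓ C.domain).prod (B.domain ⊓ D.domain))
          (q := B.domain ⊓ D.domain) (fun _ hx => hx.2))

/-- A linear operator on a product space has a matrix representation if it is induced
by some block operator matrix. -/
def HasMatrixRep (T : (X₁ × X₂) →ₗ.[ℂ] (Y₁ × Y₂)) : Prop :=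
  ∃ (A : X₁ →ₗ.[ℂ] Y₁) (B : X₂ →ₗ.[ℂ] Y₁) (C : X₁ →ₗ.[ℂ] Y₂) (D : X₂ →ₗ.[ℂ] Y₂),
    T = blockOp A B C D

/-- The composition of two partially defined operators, with its natural domain
`{x ∈ D(B) : B x ∈ D(A)}`. -/
noncomputable def pcomp (A : F →ₗ.[ℂ] G) (B : E →ₗ.[ℂ] F) : E →ₗ.[ℂ] G where
  domain :=
    { carrier := {x | ∃ hx : x ∈ B.domain, B ⟨x, hx⟩ ∈ A.domain}
      zero_mem' := ⟨B.domain.zero_mem, by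
        have : (⟨0, B.domain.zero_mem⟩ : B.domain) = 0 := rfl
        rw [this, LinearPMap.map_zero]; exact A.domain.zero_mem⟩
      add_mem' := by
        rintro a b ⟨ha, ha'⟩ ⟨hb, hb'⟩
        refine ⟨add_mem ha hb, ?_⟩
        have : (⟨a + b, add_mem ha hb⟩ : B.domain) = ⟨a, ha⟩ + ⟨b, hb⟩ := rfl
        rw [this, LinearPMap.map_add]
        exact add_mem ha' hb'
      smul_mem' := by
        rintro c a ⟨ha, ha'⟩
        refine ⟨Submodule.smul_mem _ c ha, ?_⟩
        have : (⟨c • a, Submodule.smul_mem _ c ha⟩ : B.domain) = c • (⟨a, ha⟩ : B.domain) := rfl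
        rw [this, LinearPMap.map_smul]
        exact Submodule.smul_mem _ c ha' }
  toFun := A.toFun ∘ₗ LinearMap.codRestrict A.domain
      (B.toFun ∘ₗ
        { toFun := fun x => (⟨(x : E), x.2.choose⟩ : B.domain)
          map_add' := fun x y => Subtype.ext rfl
          map_smul' := fun c x => Subtype.ext rfl })
      (fun x => x.2.choose_spec)

end BlockOp

namespace BlockOp

section Transport

variable {E F G E' F' : Type*}
  [AddCommGroup E] [Module ℂ E] [AddCommGroup F] [Module ℂ F] [AddCommGroup G] [Module ℂ G]
  [AddCommGroup E'] [Module ℂ E'] [AddCommGroup F'] [Module ℂ F']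

/-- Transport a partially defined linear map along linear equivalences. -/
noncomputable def pmapCongr (e : E ≃ₗ[ℂ] E') (T : E' →ₗ.[ℂ] F') (e' : F' ≃ₗ[ℂ] F) :
    E →ₗ.[ℂ] F where
  domain := T.domain.comap (e : E →ₗ[ℂ] E')
  toFun := (e' : F' →ₗ[ℂ] F) ∘ₗ T.toFun ∘ₗ
    ((e : E →ₗ[ℂ] E').restrict (p := T.domain.comap (e : E →ₗ[ℂ] E')) (q := T.domain)
      (fun _ hx => hx))

end Transport

section Corners

variable {X₁ X₂ Y₁ Y₂ : Type*}
  [AddCommGroup X₁] [Module ℂ X₁] [AddCommGroup X₂] [Module ℂ X₂]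
  [AddCommGroup Y₁] [Module ℂ Y₁] [AddCommGroup Y₂] [Module ℂ Y₂]

/-- The upper-left corner `P₁ 𝒜 J₁` of an operator on a product space, with domain
`{x₁ : (x₁, 0) ∈ D(𝒜)}`. -/
noncomputable def corner₁₁ (T : (X₁ × X₂) →ₗ.[ℂ] (Y₁ × Y₂)) : X₁ →ₗ.[ℂ] Y₁ where
  domain := T.domain.comap (LinearMap.inl ℂ X₁ X₂)
  toFun := LinearMap.fst ℂ Y₁ Y₂ ∘ₗ T.toFun ∘ₗ
    ((LinearMap.inl ℂ X₁ X₂).restrict (p := T.domain.comap (LinearMap.inl ℂ X₁ X₂))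
      (q := T.domain) (fun _ hx => hx))

/-- The lower-left corner `P₂ 𝒜 J₁`. -/
noncomputable def corner₂₁ (T : (X₁ × X₂) →ₗ.[ℂ] (Y₁ × Y₂)) : X₁ →ₗ.[ℂ] Y₂ where
  domain := T.domain.comap (LinearMap.inl ℂ X₁ X₂)
  toFun := LinearMap.snd ℂ Y₁ Y₂ ∘ₗ T.toFun ∘ₗ
    ((LinearMap.inl ℂ X₁ X₂).restrict (p := T.domain.comap (LinearMap.inl ℂ X₁ X₂))
      (q := T.domain) (fun _ hx => hx))

/-- The upper-right corner `P₁ 𝒜 J₂`. -/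
noncomputable def corner₁₂ (T : (X₁ × X₂) →ₗ.[ℂ] (Y₁ × Y₂)) : X₂ →ₗ.[ℂ] Y₁ where
  domain := T.domain.comap (LinearMap.inr ℂ X₁ X₂)
  toFun := LinearMap.fst ℂ Y₁ Y₂ ∘ₗ T.toFun ∘ₗ
    ((LinearMap.inr ℂ X₁ X₂).restrict (p := T.domain.comap (LinearMap.inr ℂ X₁ X₂))
      (q := T.domain) (fun _ hx => hx))

/-- The lower-right corner `P₂ 𝒜 J₂`. -/
noncomputable def corner₂₂ (T : (X₁ × X₂) →ₗ.[ℂ] (Y₁ × Y₂)) : X₂ →ₗ.[ℂ] Y₂ where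
  domain := T.domain.comap (LinearMap.inr ℂ X₁ X₂)
  toFun := LinearMap.snd ℂ Y₁ Y₂ ∘ₗ T.toFun ∘ₗ
    ((LinearMap.inr ℂ X₁ X₂).restrict (p := T.domain.comap (LinearMap.inr ℂ X₁ X₂))
      (q := T.domain) (fun _ hx => hx))

end Corners

section Shift

variable {E : Type*} [AddCommGroup E] [Module ℂ E]

/-- `T - λ`, i.e. `T - λ·I`, with domain `D(T)`. -/
noncomputable def shift (T : E →ₗ.[ℂ] E) (lam : ℂ) : E →ₗ.[ℂ] E :=
  T - (lam • (LinearMap.id : E →ₗ[ℂ] E)).toPMap ⊤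

/-- The identity as a partially defined operator with full domain. -/
noncomputable def idP (E : Type*) [AddCommGroup E] [Module ℂ E] : E →ₗ.[ℂ] E :=
  (LinearMap.id : E →ₗ[ℂ] E).toPMap ⊤

end Shift

section Resolvent

variable {E : Type*} [NormedAddCommGroup E] [NormedSpace ℂ E]

/-- `R` is the (bounded, everywhere defined) inverse of `T - λ`;
this witnesses that `λ` belongs to the resolvent set of `T`. -/
structure IsResolventAt (T : E →ₗ.[ℂ] E) (lam : ℂ) (R : E →L[ℂ] E) : Prop where
  mem : ∀ y, R y ∈ T.domain
  right_inv : ∀ y, T ⟨R y, mem y⟩ - lam • (R y) = y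
  left_inv : ∀ x : T.domain, R (T x - lam • (x : E)) = x

/-- The resolvent set of `T`: those `λ ∈ ℂ` for which `T - λ` is a bijection from `D(T)`
onto the whole space with bounded inverse. -/
def resolventSet (T : E →ₗ.[ℂ] E) : Set ℂ :=
  {lam | ∃ R : E →L[ℂ] E, IsResolventAt T lam R}

end Resolvent

section RelativeBound

variable {E F G : Type*} [NormedAddCommGroup E] [NormedSpace ℂ E]
  [NormedAddCommGroup F] [NormedSpace ℂ F] [NormedAddCommGroup G] [NormedSpace ℂ G]

/-- `S` is `T`-bounded with constants `a`, `b`: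
`D(T) ⊆ D(S)` and `‖S x‖ ≤ a ‖x‖ + b ‖T x‖` on `D(T)`. -/
structure RelBound (S : E →ₗ.[ℂ] G) (T : E →ₗ.[ℂ] F) (a b : ℝ) : Prop where
  dom_le : T.domain ≤ S.domain
  bound : ∀ x : T.domain, ‖S ⟨(x : E), dom_le x.2⟩‖ ≤ a * ‖(x : E)‖ + b * ‖T x‖

/-- `S` is `T`-bounded with relative bound `< c`. -/
def IsRelBoundedLt (S : E →ₗ.[ℂ] G) (T : E →ₗ.[ℂ] F) (c : ℝ) : Prop :=
  ∃ b, 0 ≤ b ∧ b < c ∧ ∃ a, 0 ≤ a ∧ RelBound S T a b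

/-- `S` is `T`-bounded with relative bound `≤ c` (for `c = 0`: relative bound `0`). -/
def IsRelBoundedLe (S : E →ₗ.[ℂ] G) (T : E →ₗ.[ℂ] F) (c : ℝ) : Prop :=
  ∀ b, c < b → ∃ a, 0 ≤ a ∧ RelBound S T a b

end RelativeBound

section HilbertProduct

variable {H₁ H₂ K₁ K₂ : Type*}
  [NormedAddCommGroup H₁] [InnerProductSpace ℂ H₁]
  [NormedAddCommGroup H₂] [InnerProductSpace ℂ H₂]
  [NormedAddCommGroup K₁] [InnerProductSpace ℂ K₁]
  [NormedAddCommGroup K₂] [InnerProductSpace ℂ K₂]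

/-- The operator induced by a block operator matrix on the Hilbert space
`H₁ ×_{ℓ²} H₂`, i.e. `WithLp 2 (H₁ × H₂)`. -/
noncomputable def blockOpL (A : H₁ →ₗ.[ℂ] K₁) (B : H₂ →ₗ.[ℂ] K₁)
    (C : H₁ →ₗ.[ℂ] K₂) (D : H₂ →ₗ.[ℂ] K₂) :
    WithLp 2 (H₁ × H₂) →ₗ.[ℂ] WithLp 2 (K₁ × K₂) :=
  pmapCongr (WithLp.linearEquiv 2 ℂ (H₁ × H₂)) (blockOp A B C D)
    (WithLp.linearEquiv 2 ℂ (K₁ × K₂)).symm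

/-- A linear operator on `H₁ ×_{ℓ²} H₂` has a matrix representation if it is induced by
some block operator matrix. -/
def HasMatrixRepL (T : WithLp 2 (H₁ × H₂) →ₗ.[ℂ] WithLp 2 (K₁ × K₂)) : Prop :=
  ∃ (A : H₁ →ₗ.[ℂ] K₁) (B : H₂ →ₗ.[ℂ] K₁) (C : H₁ →ₗ.[ℂ] K₂) (D : H₂ →ₗ.[ℂ] K₂),
    T = blockOpL A B C D

end HilbertProduct

section EssSelfAdjoint

variable {E : Type*} [NormedAddCommGroup E] [InnerProductSpace ℂ E] [CompleteSpace E]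

/-- An operator is essentially self-adjoint if it is closable and its closure is
self-adjoint. -/
def IsEssentiallySelfAdjoint (T : E →ₗ.[ℂ] E) : Prop :=
  T.IsClosable ∧ IsSelfAdjoint T.closure

end EssSelfAdjoint

end BlockOp


namespace BlockOpAux

open LinearPMap
open scoped LinearPMap ComplexConjugate

local notation "⟪" x ", " y "⟫" => @inner ℂ _ _ x y

variable {E : Type*} [NormedAddCommGroup E] [InnerProductSpace ℂ E] [CompleteSpace E]

/-- If `T ≤ T†` then `T` is symmetric. -/
theorem symm_of_le_adjoint {T : E →ₗ.[ℂ] E} (hTd : Dense (T.domain : Set E))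
    (hle : T ≤ T.adjoint) (x y : T.domain) : ⟪T x, (y : E)⟫ = ⟪(x : E), T y⟫ := by
  obtain ⟨y', hy', hvy⟩ := exists_of_le hle y
  calc ⟪T x, (y : E)⟫ = (starRingEnd ℂ) ⟪(y : E), T x⟫ := (inner_conj_symm _ _).symm
    _ = (starRingEnd ℂ) ⟪T.adjoint y', (x : E)⟫ := by
        rw [adjoint_isFormalAdjoint hTd y' x, hy']
    _ = ⟪(x : E), T.adjoint y'⟫ := inner_conj_symm _ _
    _ = ⟪(x : E), T y⟫ := by rw [← hvy]

/-- Criterion: a symmetric densely defined operator which is surjective after subtracting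
a bounded operator `V` (and its adjoint `V'`) is self-adjoint. -/
theorem adjoint_eq_of_symm_surj (T : E →ₗ.[ℂ] E) (hTd : Dense (T.domain : Set E))
    (hsym : ∀ x y : T.domain, ⟪T x, (y : E)⟫ = ⟪(x : E), T y⟫)
    (V V' : E →L[ℂ] E) (hVV' : ∀ u y : E, ⟪V' u, y⟫ = ⟪u, V y⟫)
    (hsurjV : ∀ y : E, ∃ x : T.domain, T x - V x = y)
    (hsurjV' : ∀ y : E, ∃ x : T.domain, T x - V' x = y) :
    T.adjoint = T := by
  have hle : T ≤ T.adjoint := IsFormalAdjoint.le_adjoint hTd (fun x y => hsym x y)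
  have key : ∀ y : T.adjoint.domain, ∃ hy : (y : E) ∈ T.domain,
      T.adjoint y = T ⟨y, hy⟩ := by
    intro y
    obtain ⟨x, hx⟩ := hsurjV (T.adjoint y - V y)
    have horto : ∀ u : T.domain, ⟪T u - V' (u : E), (y : E) - (x : E)⟫ = 0 := by
      intro u
      have h1 : ⟪T u, (y : E)⟫ = ⟪(u : E), T.adjoint y⟫ := by
        rw [← inner_conj_symm, ← adjoint_isFormalAdjoint hTd y u, inner_conj_symm]
      have h2 : ⟪T u, (x : E)⟫ = ⟪(u : E), T x⟫ := hsym u x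
      rw [inner_sub_right, inner_sub_left, inner_sub_left, h1, h2, hVV', hVV']
      have : ⟪(u : E), T.adjoint y⟫ - ⟪(u : E), V (y : E)⟫ -
          (⟪(u : E), T x⟫ - ⟪(u : E), V (x : E)⟫) =
          ⟪(u : E), (T.adjoint y - V (y : E)) - (T x - V (x : E))⟫ := by
        simp [inner_sub_right]
      rw [this, hx, sub_self, inner_zero_right]
    have hyx : (y : E) = (x : E) := by
      have := hsurjV' ((y : E) - (x : E))
      obtain ⟨u, hu⟩ := this
      have h0 := horto u
      rw [hu, inner_self_eq_zero, sub_eq_zero] at h0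
      exact h0
    refine ⟨hyx ▸ x.2, ?_⟩
    have hTx : T ⟨(y : E), hyx ▸ x.2⟩ = T x := by
      congr 1
      exact Subtype.ext hyx
    rw [hTx]
    have hV : V (x : E) = V (y : E) := by rw [hyx]
    rw [hV] at hx
    exact (sub_left_injective hx).symm
  refine le_antisymm ?_ hle
  refine ⟨fun a ha => (key ⟨a, ha⟩).1, ?_⟩
  intro a b hab
  obtain ⟨ha', hval⟩ := key a
  rw [hval]
  congr 1
  exact Subtype.ext hab

theorem adjoint_graph_eq (T : E →ₗ.[ℂ] E) (hTd : Dense (T.domain : Set E)) :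
    (T.adjoint.graph : Set (E × E)) =
      ⋂ u : T.domain, {p : E × E | ⟪p.2, (u : E)⟫ = ⟪p.1, T u⟫} := by
  ext p
  simp only [Set.mem_iInter, Set.mem_setOf_eq, SetLike.mem_coe, mem_graph_iff]
  constructor
  · rintro ⟨y, hy, hval⟩ u
    rw [← hy, ← hval]
    exact adjoint_isFormalAdjoint hTd y u
  · intro h
    have hmem : p.1 ∈ T.adjoint.domain :=
      mem_adjoint_domain_of_exists _ ⟨p.2, fun u => h u⟩
    exact ⟨⟨p.1, hmem⟩, rfl, adjoint_apply_eq hTd ⟨p.1, hmem⟩ (fun u => h u)⟩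

theorem adjoint_isClosed (T : E →ₗ.[ℂ] E) (hTd : Dense (T.domain : Set E)) :
    T.adjoint.IsClosed := by
  rw [LinearPMap.IsClosed, adjoint_graph_eq T hTd]
  refine isClosed_iInter fun u => isClosed_eq ?_ ?_
  · exact Continuous.inner continuous_snd continuous_const
  · exact Continuous.inner continuous_fst continuous_const

/-- Norm identity for symmetric operators: `‖Tx - iμx‖² = ‖Tx‖² + μ²‖x‖²`. -/
theorem norm_sq_sub_smul_I (T : E →ₗ.[ℂ] E)
    (hsym : ∀ x y : T.domain, ⟪T x, (y : E)⟫ = ⟪(x : E), T y⟫) (μ : ℝ) (x : T.domain) :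
    ‖T x - (Complex.I * μ) • (x : E)‖ ^ 2 = ‖T x‖ ^ 2 + μ ^ 2 * ‖(x : E)‖ ^ 2 := by
  have hreal : ⟪T x, (x : E)⟫ = conj ⟪T x, (x : E)⟫ := by
    rw [inner_conj_symm]
    exact hsym x x
  have hre : (⟪T x, (x : E)⟫).im = 0 := by
    have := Complex.conj_eq_iff_im.mp hreal.symm
    exact this
  have expand := @norm_sub_sq ℂ _ _ _ _ (T x) ((Complex.I * μ) • (x : E))
  rw [expand]
  rw [inner_smul_right]
  rw [norm_smul]
  have h1 : RCLike.re ((Complex.I * (μ : ℂ)) * ⟪T x, (x : E)⟫) = 0 := by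
    have : ((Complex.I * (μ : ℂ)) * ⟪T x, (x : E)⟫).re =
        -(μ * (⟪T x, (x : E)⟫).im) := by
      simp [Complex.mul_re, Complex.mul_im]
    simp only [RCLike.re_to_complex, this, hre, mul_zero, neg_zero]
  rw [h1]
  have h2 : ‖Complex.I * (μ : ℂ)‖ = |μ| := by
    simp [norm_mul]
  rw [h2]
  rw [mul_pow, sq_abs]
  ring

theorem surj_smul_I_of_selfAdjoint (T : E →ₗ.[ℂ] E) (hT : T.adjoint = T)
    (μ : ℝ) (hμ : μ ≠ 0) (y : E) :
    ∃ x : T.domain, T x - (Complex.I * μ) • (x : E) = y := by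
  set c : ℂ := Complex.I * μ with hc
  have hc0 : c ≠ 0 := by
    simp [hc, Complex.I_ne_zero, hμ, Complex.ofReal_eq_zero]
  have hTd : Dense (T.domain : Set E) := (isSelfAdjoint_def.mpr hT).dense_domain
  have hsym := symm_of_le_adjoint hTd (le_of_eq hT.symm)
  have hclosed : T.IsClosed := hT ▸ adjoint_isClosed T hTd
  -- the shifted operator as a linear map on the domain
  set Slin : T.domain →ₗ[ℂ] E := T.toFun - c • (T.domain.subtype) with hSlin
  have hSlin_apply : ∀ x : T.domain, Slin x = T x - c • (x : E) := fun x => rfl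
  have hlow : ∀ x : T.domain, |μ| * ‖(x : E)‖ ≤ ‖Slin x‖ := by
    intro x
    have h := norm_sq_sub_smul_I T hsym μ x
    have h1 : (|μ| * ‖(x : E)‖) ^ 2 ≤ ‖Slin x‖ ^ 2 := by
      rw [hSlin_apply, h, mul_pow, sq_abs]
      nlinarith [sq_nonneg ‖T x‖]
    have h2 := Real.sqrt_le_sqrt h1
    rwa [Real.sqrt_sq (by positivity), Real.sqrt_sq (norm_nonneg _)] at h2
  set S : Submodule ℂ E := LinearMap.range Slin with hS
  have hSclosed : IsClosed (S : Set E) := by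
    refine IsSeqClosed.isClosed ?_
    intro f z hf hfz
    choose x hx using hf
    have hcauchy : CauchySeq f := hfz.cauchySeq
    have hxc : CauchySeq (fun n => (x n : E)) := by
      rw [Metric.cauchySeq_iff] at hcauchy ⊢
      intro ε hε
      obtain ⟨N, hN⟩ := hcauchy (ε * |μ|) (by positivity)
      refine ⟨N, fun m hm n hn => ?_⟩
      have h1 := hN m hm n hn
      rw [dist_eq_norm] at h1 ⊢
      have h2 : |μ| * ‖(x m : E) - (x n : E)‖ ≤ ‖f m - f n‖ := by
        have := hlow (x m - x n)
        rw [hSlin_apply] at this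
        have he : T (x m - x n) - c • ((x m - x n : T.domain) : E) = f m - f n := by
          rw [T.map_sub]
          push_cast
          rw [smul_sub, ← hx m, ← hx n, hSlin_apply, hSlin_apply]
          abel
        rw [he] at this
        exact_mod_cast this
      have hμpos : (0:ℝ) < |μ| := abs_pos.mpr hμ
      calc ‖(x m : E) - (x n : E)‖ ≤ ‖f m - f n‖ / |μ| := by
            rw [le_div_iff₀ hμpos]; linarith [h2]
        _ < ε := by rw [div_lt_iff₀ hμpos]; linarith [h1]
    obtain ⟨xl, hxl⟩ := cauchySeq_tendsto_of_complete hxc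
    have hTx : Filter.Tendsto (fun n => T (x n)) Filter.atTop (nhds (z + c • xl)) := by
      have : ∀ n, T (x n) = f n + c • (x n : E) := by
        intro n
        rw [← hx n, hSlin_apply]; abel
      simp_rw [this]
      exact hfz.add (hxl.const_smul c)
    have hgraph : (xl, z + c • xl) ∈ T.graph := by
      refine hclosed.mem_of_tendsto ((hxl.prodMk_nhds hTx)) ?_
      exact Filter.Eventually.of_forall fun n => T.mem_graph (x n)
    rw [mem_graph_iff] at hgraph
    obtain ⟨x', hx'1, hx'2⟩ := hgraph
    refine ⟨x', ?_⟩
    have h1 : (x' : E) = xl := hx'1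
    have h2 : T x' = z + c • xl := hx'2
    rw [hSlin_apply, h2, h1]
    abel
  have hortho : Sᗮ = ⊥ := by
    rw [Submodule.eq_bot_iff]
    intro v hv
    rw [Submodule.mem_orthogonal] at hv
    have hv' : ∀ x : T.domain, ⟪T x - c • (x : E), v⟫ = 0 := by
      intro x
      exact hv _ ⟨x, rfl⟩
    have hcc : conj c = -c := by
      rw [hc, map_mul, Complex.conj_I, Complex.conj_ofReal]; ring
    have hw : ∀ x : T.domain, ⟪(-c) • v, (x : E)⟫ = ⟪v, T x⟫ := by
      intro x
      have h1 := hv' x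
      rw [inner_sub_left, sub_eq_zero, inner_smul_left] at h1
      -- h1 : ⟪T x, v⟫ = conj c * ⟪x, v⟫
      calc ⟪(-c) • v, (x : E)⟫ = conj (-c) * ⟪v, (x : E)⟫ := inner_smul_left _ _ _
        _ = c * ⟪v, (x : E)⟫ := by rw [_root_.map_neg, hcc, neg_neg]
        _ = conj (conj c * ⟪(x : E), v⟫) := by
            rw [_root_.map_mul, Complex.conj_conj, inner_conj_symm]
        _ = conj ⟪T x, v⟫ := by rw [h1]
        _ = ⟪v, T x⟫ := inner_conj_symm _ _
    have hmem : v ∈ T.adjoint.domain :=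
      mem_adjoint_domain_of_exists _ ⟨(-c) • v, hw⟩
    have hval : T.adjoint ⟨v, hmem⟩ = (-c) • v :=
      adjoint_apply_eq hTd _ (fun x => hw x)
    obtain ⟨hdomeq, hfun⟩ := ext_iff.mp hT
    have hvdom : v ∈ T.domain := hdomeq ▸ hmem
    have hTv : T ⟨v, hvdom⟩ = (-c) • v := by
      rw [← hfun (x := v) (hf := hmem) (hg := hvdom)]
      exact hval
    have hr : ⟪T ⟨v, hvdom⟩, v⟫ = conj ⟪T ⟨v, hvdom⟩, v⟫ := by
      conv_lhs => rw [hsym ⟨v, hvdom⟩ ⟨v, hvdom⟩]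
      rw [inner_conj_symm]
    have h2c : c * ⟪v, v⟫ = -c * ⟪v, v⟫ := by
      calc c * ⟪v, v⟫ = conj (-c) * ⟪v, v⟫ := by rw [_root_.map_neg, hcc, neg_neg]
        _ = ⟪(-c) • v, v⟫ := (inner_smul_left _ _ _).symm
        _ = ⟪T ⟨v, hvdom⟩, v⟫ := by rw [hTv]
        _ = conj ⟪T ⟨v, hvdom⟩, v⟫ := hr
        _ = conj ⟪(-c) • v, v⟫ := by rw [hTv]
        _ = conj (conj (-c) * ⟪v, v⟫) := by rw [inner_smul_left]
        _ = (-c) * conj ⟪v, v⟫ := by rw [_root_.map_mul, Complex.conj_conj]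
        _ = -c * ⟪v, v⟫ := by rw [inner_conj_symm]
    have hz : (2 * c) * ⟪v, v⟫ = 0 := by linear_combination h2c
    have h0 : ⟪v, v⟫ = (0:ℂ) := by
      rcases mul_eq_zero.mp hz with h | h
      · exact absurd h (by simpa using hc0)
      · exact h
    exact inner_self_eq_zero.mp h0
  haveI : CompleteSpace S := hSclosed.completeSpace_coe
  have htop : S = ⊤ := by
    have := Submodule.sup_orthogonal_of_hasOrthogonalProjection (K := S)
    rw [hortho, sup_bot_eq] at this
    exact this
  have hy : y ∈ S := htop ▸ Submodule.mem_top
  obtain ⟨x, hx⟩ := hy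
  exact ⟨x, by rw [← hx, hSlin_apply]⟩

/-- Hess–Kato: if `B` is closed, `S` is closable and `D(B) ⊆ D(S)`, then `S` is `B`-bounded. -/
theorem exists_relBound (B S : E →ₗ.[ℂ] E) (hB : B.IsClosed) (hS : S.IsClosable)
    (hdom : B.domain ≤ S.domain) :
    ∃ C : ℝ, 0 ≤ C ∧ ∀ x : B.domain, ‖S ⟨(x : E), hdom x.2⟩‖ ≤ C * ‖(x : E)‖ + C * ‖B x‖ := by
  haveI : CompleteSpace B.graph := hB.completeSpace_coe
  have hmem : ∀ p : B.graph, (p : E × E).1 ∈ B.domain := by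
    intro p
    obtain ⟨x, hx1, _⟩ := (mem_graph_iff B).mp p.2
    rw [← hx1]; exact x.2
  have harg : ∀ (p q : B.graph) (h : (p : E × E).1 = (q : E × E).1),
      (⟨(p : E × E).1, hdom (hmem p)⟩ : S.domain) = ⟨(q : E × E).1, hdom (hmem q)⟩ :=
    fun p q h => Subtype.ext h
  set L : B.graph →ₗ[ℂ] E :=
    { toFun := fun p => S ⟨(p : E × E).1, hdom (hmem p)⟩
      map_add' := by
        intro p q
        show S ⟨((p + q : B.graph) : E × E).1, hdom (hmem (p + q))⟩
            = S ⟨(p : E × E).1, hdom (hmem p)⟩ + S ⟨(q : E × E).1, hdom (hmem q)⟩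
        have : (⟨((p + q : B.graph) : E × E).1, hdom (hmem (p + q))⟩ : S.domain)
            = ⟨(p : E × E).1, hdom (hmem p)⟩ + ⟨(q : E × E).1, hdom (hmem q)⟩ :=
          Subtype.ext rfl
        rw [this, S.map_add]
      map_smul' := by
        intro c p
        show S ⟨((c • p : B.graph) : E × E).1, hdom (hmem (c • p))⟩
            = c • S ⟨(p : E × E).1, hdom (hmem p)⟩
        have : (⟨((c • p : B.graph) : E × E).1, hdom (hmem (c • p))⟩ : S.domain)
            = c • ⟨(p : E × E).1, hdom (hmem p)⟩ :=
          Subtype.ext rfl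
        rw [this, S.map_smul] } with hL
  have hLapp : ∀ p : B.graph, L p = S ⟨(p : E × E).1, hdom (hmem p)⟩ := fun p => rfl
  have hgraph_closed : IsClosed (L.graph : Set (B.graph × E)) := by
    refine IsSeqClosed.isClosed ?_
    rintro u ⟨g, w⟩ hu hlim
    rw [SetLike.mem_coe, LinearMap.mem_graph_iff]
    -- limits of the pieces
    have hg : Filter.Tendsto (fun n => (u n).1) Filter.atTop (nhds g) :=
      (continuous_fst.tendsto _).comp hlim
    have hw : Filter.Tendsto (fun n => (u n).2) Filter.atTop (nhds w) :=
      (continuous_snd.tendsto _).comp hlim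
    have ha : Filter.Tendsto (fun n => ((u n).1 : E × E).1) Filter.atTop
        (nhds ((g : E × E).1)) :=
      (continuous_fst.tendsto _).comp ((continuous_subtype_val.tendsto _).comp hg)
    have hSgraph : ((g : E × E).1, w) ∈ S.closure.graph := by
      rw [← hS.graph_closure_eq_closure_graph, ← SetLike.mem_coe,
        Submodule.topologicalClosure_coe]
      have hval : ∀ n, (u n).2 = S ⟨((u n).1 : E × E).1, hdom (hmem (u n).1)⟩ := by
        intro n
        have := hu n
        rw [SetLike.mem_coe, LinearMap.mem_graph_iff] at this
        rw [this, hLapp]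
      have hw' : Filter.Tendsto
          (fun n => (S ⟨((u n).1 : E × E).1, hdom (hmem (u n).1)⟩ : E))
          Filter.atTop (nhds w) := by
        simp_rw [hval] at hw
        exact hw
      refine mem_closure_of_tendsto (f := fun n =>
        ((((u n).1 : E × E).1 : E), (S ⟨((u n).1 : E × E).1, hdom (hmem (u n).1)⟩ : E)))
        (ha.prodMk_nhds hw') ?_
      refine Filter.Eventually.of_forall fun n => ?_
      exact S.mem_graph ⟨((u n).1 : E × E).1, hdom (hmem (u n).1)⟩
    have hSval : ((g : E × E).1, S ⟨(g : E × E).1, hdom (hmem g)⟩) ∈ S.closure.graph := by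
      apply le_graph_of_le (le_closure S)
      exact S.mem_graph ⟨(g : E × E).1, hdom (hmem g)⟩
    have := S.closure.mem_graph_snd_inj hSgraph hSval rfl
    rw [hLapp, this]
  have hLcont : Continuous L := L.continuous_of_isClosed_graph hgraph_closed
  set Lc : B.graph →L[ℂ] E := ⟨L, hLcont⟩ with hLc
  refine ⟨max ‖Lc‖ 0, le_max_right _ _, ?_⟩
  intro x
  set p : B.graph := ⟨((x : E), B x), B.mem_graph x⟩ with hp
  have h1 : S ⟨(x : E), hdom x.2⟩ = L p := rfl
  have h2 : ‖L p‖ ≤ ‖Lc‖ * ‖p‖ := Lc.le_opNorm p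
  have h3 : ‖p‖ = max ‖(x : E)‖ ‖B x‖ := rfl
  have h4 : max ‖(x : E)‖ ‖B x‖ ≤ ‖(x : E)‖ + ‖B x‖ :=
    max_le (le_add_of_nonneg_right (norm_nonneg _)) (le_add_of_nonneg_left (norm_nonneg _))
  have h5 : ‖Lc‖ * ‖p‖ ≤ max ‖Lc‖ 0 * (‖(x : E)‖ + ‖B x‖) := by
    rw [h3]
    have := mul_le_mul (le_max_left ‖Lc‖ 0) h4 (by positivity) (le_max_right ‖Lc‖ 0)
    exact this
  rw [h1]
  calc ‖L p‖ ≤ ‖Lc‖ * ‖p‖ := h2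
    _ ≤ max ‖Lc‖ 0 * (‖(x : E)‖ + ‖B x‖) := h5
    _ = max ‖Lc‖ 0 * ‖(x : E)‖ + max ‖Lc‖ 0 * ‖B x‖ := by ring

/-- Kato–Rellich: a symmetric relatively bounded perturbation (bound `< 1`) of a self-adjoint
operator, on the same domain, is self-adjoint. -/
theorem adjoint_eq_of_perturbation (T A : E →ₗ.[ℂ] E)
    (hT : T.adjoint = T) (hdom : A.domain = T.domain)
    (hAd : Dense (A.domain : Set E))
    (hAsym : ∀ x y : A.domain, ⟪A x, (y : E)⟫ = ⟪(x : E), A y⟫)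
    (a b : ℝ) (ha : 0 ≤ a) (hb : 0 ≤ b) (hb1 : b < 1)
    (hbound : ∀ x : T.domain, ‖A ⟨(x : E), hdom.symm.le x.2⟩ - T x‖ ≤ a * ‖(x : E)‖ + b * ‖T x‖) :
    A.adjoint = A := by
  have hTd : Dense (T.domain : Set E) := hdom ▸ hAd
  have hsymT := symm_of_le_adjoint hTd (le_of_eq hT.symm)
  have hTled : T.domain ≤ A.domain := le_of_eq hdom.symm
  set μ : ℝ := (a + 1) / (1 - b) with hμdef
  have hμpos : 0 < μ := by
    apply div_pos <;> linarith
  have hk : a / μ + b < 1 := by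
    rw [hμdef, div_div_eq_mul_div]
    have h1b : (0:ℝ) < 1 - b := by linarith
    have h2 : a / (a + 1) < 1 := by
      rw [div_lt_one (by linarith)]; linarith
    calc a * (1 - b) / (a + 1) + b = (a / (a + 1)) * (1 - b) + b := by ring
      _ < 1 * (1 - b) + b := by
          have := mul_lt_mul_of_pos_right h2 h1b
          linarith
      _ = 1 := by ring
  have key : ∀ μ' : ℝ, μ' ≠ 0 → |μ'| = μ →
      ∀ y : E, ∃ x : A.domain, A x - (Complex.I * μ') • (x : E) = y := by
    intro μ' hμ' habs y
    set c : ℂ := Complex.I * μ' with hc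
    have hsurjT := surj_smul_I_of_selfAdjoint T hT μ' hμ'
    have hlow : ∀ x : T.domain, ‖T x‖ ≤ ‖T x - c • (x : E)‖ ∧
        |μ'| * ‖(x : E)‖ ≤ ‖T x - c • (x : E)‖ := by
      intro x
      have h := norm_sq_sub_smul_I T hsymT μ' x
      constructor
      · have h1 : ‖T x‖ ^ 2 ≤ ‖T x - c • (x : E)‖ ^ 2 := by
          rw [h]; nlinarith [sq_nonneg (μ' * ‖(x : E)‖), sq_nonneg ‖(x:E)‖, sq_nonneg μ']
        have h2 := Real.sqrt_le_sqrt h1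
        rwa [Real.sqrt_sq (norm_nonneg _), Real.sqrt_sq (norm_nonneg _)] at h2
      · have h1 : (|μ'| * ‖(x : E)‖) ^ 2 ≤ ‖T x - c • (x : E)‖ ^ 2 := by
          rw [h, mul_pow, sq_abs]; nlinarith [sq_nonneg ‖T x‖]
        have h2 := Real.sqrt_le_sqrt h1
        rwa [Real.sqrt_sq (by positivity), Real.sqrt_sq (norm_nonneg _)] at h2
    have hinj : ∀ x x' : T.domain, T x - c • (x : E) = T x' - c • (x' : E) → x = x' := by
      intro x x' hxx
      have h0 : T (x - x') - c • ((x - x' : T.domain) : E) = 0 := by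
        rw [T.map_sub]
        push_cast
        rw [smul_sub]
        have hre : (T x - T x' - (c • (x : E) - c • (x' : E)) : E)
            = (T x - c • (x : E)) - (T x' - c • (x' : E)) := by abel
        rw [hre, hxx, sub_self]
      have := (hlow (x - x')).2
      rw [h0, norm_zero] at this
      have hx0 : ‖((x - x' : T.domain) : E)‖ = 0 := by
        have habs0 : 0 < |μ'| := abs_pos.mpr hμ'
        nlinarith [norm_nonneg ((x - x' : T.domain) : E)]
      have : ((x - x' : T.domain) : E) = 0 := norm_eq_zero.mp hx0
      have : (x : E) = (x' : E) := by
        have h := this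
        push_cast at h
        rwa [sub_eq_zero] at h
      exact Subtype.ext this
    -- solution operator g
    set g : E → T.domain := fun y => Classical.choose (hsurjT y) with hgdef
    have hg : ∀ y, T (g y) - c • ((g y : T.domain) : E) = y :=
      fun y => Classical.choose_spec (hsurjT y)
    have hgadd : ∀ y z, g (y + z) = g y + g z := by
      intro y z
      apply hinj
      rw [hg, T.map_add]
      push_cast
      rw [smul_add]
      have hre : (T (g y) + T (g z) - (c • ((g y : T.domain) : E) + c • ((g z : T.domain) : E)) : E)
          = (T (g y) - c • ((g y : T.domain) : E)) + (T (g z) - c • ((g z : T.domain) : E)) := by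
        abel
      rw [hre, hg y, hg z]
    have hgsmul : ∀ (r : ℂ) y, g (r • y) = r • g y := by
      intro r y
      apply hinj
      rw [hg, T.map_smul]
      push_cast
      rw [smul_comm c r]
      rw [← smul_sub, hg y]
    set glin : E →ₗ[ℂ] T.domain :=
      { toFun := g
        map_add' := hgadd
        map_smul' := hgsmul } with hglin
    have hgnorm : ∀ y, ‖((g y : T.domain) : E)‖ ≤ ‖y‖ / |μ'| ∧ ‖T (g y)‖ ≤ ‖y‖ := by
      intro y
      have h1 := (hlow (g y)).1
      have h2 := (hlow (g y)).2
      rw [hg y] at h1 h2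
      have habs0 : 0 < |μ'| := abs_pos.mpr hμ'
      exact ⟨by rw [le_div_iff₀ habs0]; linarith, h1⟩
    -- the perturbation operator
    set incl : T.domain →ₗ[ℂ] A.domain := Submodule.inclusion hTled with hincl
    set Klin : E →ₗ[ℂ] E :=
      ((A.toFun.comp incl).comp glin - T.toFun.comp glin) with hKlin
    have hKapp : ∀ y, Klin y = A (incl (g y)) - T (g y) := fun y => rfl
    have hKA : ∀ x : T.domain, A (incl x) = A ⟨(x : E), hdom.symm.le x.2⟩ :=
      fun x => rfl
    have hKbound : ∀ y, ‖Klin y‖ ≤ (a / μ + b) * ‖y‖ := by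
      intro y
      rw [hKapp, hKA]
      have h1 := hbound (g y)
      have h2 := hgnorm y
      have h3 : a * ‖((g y : T.domain) : E)‖ + b * ‖T (g y)‖ ≤
          a * (‖y‖ / |μ'|) + b * ‖y‖ := by
        have := h2.1
        have := h2.2
        gcongr
      rw [habs] at h3
      calc ‖A ⟨((g y : T.domain) : E), _⟩ - T (g y)‖ ≤
          a * ‖((g y : T.domain) : E)‖ + b * ‖T (g y)‖ := h1
        _ ≤ a * (‖y‖ / μ) + b * ‖y‖ := h3
        _ = (a / μ + b) * ‖y‖ := by rw [add_mul, div_mul_eq_mul_div, mul_div_assoc]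
    have hknn : 0 ≤ a / μ + b := by positivity
    set Kc : E →L[ℂ] E := Klin.mkContinuous (a / μ + b) hKbound with hKc
    have hKcnorm : ‖Kc‖ ≤ a / μ + b := Klin.mkContinuous_norm_le hknn hKbound
    have hKclt : ‖-Kc‖ < 1 := by
      rw [norm_neg]
      exact lt_of_le_of_lt hKcnorm hk
    set u : (E →L[ℂ] E)ˣ := Units.oneSub (-Kc) hKclt with hu
    have huval : (u : E →L[ℂ] E) = 1 + Kc := by
      rw [hu]
      show 1 - (-Kc) = 1 + Kc
      rw [sub_neg_eq_add]
    -- solve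
    set z : E := ((u⁻¹ : (E →L[ℂ] E)ˣ) : E →L[ℂ] E) y with hz
    refine ⟨incl (g z), ?_⟩
    have hcoe : ((incl (g z) : A.domain) : E) = ((g z : T.domain) : E) := rfl
    have hstep : A (incl (g z)) - c • ((incl (g z) : A.domain) : E) =
        (T (g z) - c • ((g z : T.domain) : E)) + Klin z := by
      rw [hKapp z, hKA (g z), hcoe]
      abel
    rw [hstep, hg z]
    have : z + Klin z = (1 + Kc) z := by
      show z + Klin z = (1 : E →L[ℂ] E) z + Kc z
      rfl
    rw [this, ← huval]
    have := Units.mul_inv u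
    calc (u : E →L[ℂ] E) (((u⁻¹ : (E →L[ℂ] E)ˣ) : E →L[ℂ] E) y)
        = ((u : E →L[ℂ] E) * ((u⁻¹ : (E →L[ℂ] E)ˣ) : E →L[ℂ] E)) y := rfl
      _ = y := by rw [Units.mul_inv]; rfl
  -- apply the criterion
  refine adjoint_eq_of_symm_surj A hAd hAsym
    ((Complex.I * μ) • (1 : E →L[ℂ] E)) ((Complex.I * (-μ)) • (1 : E →L[ℂ] E)) ?_ ?_ ?_
  · intro w y
    rw [ContinuousLinearMap.smul_apply, ContinuousLinearMap.one_apply,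
      ContinuousLinearMap.smul_apply, ContinuousLinearMap.one_apply,
      inner_smul_left, inner_smul_right]
    congr 1
    rw [_root_.map_mul, Complex.conj_I, _root_.map_neg, Complex.conj_ofReal]
    ring
  · intro y
    obtain ⟨x, hx⟩ := key μ (ne_of_gt hμpos) (abs_of_pos hμpos) y
    refine ⟨x, ?_⟩
    rw [ContinuousLinearMap.smul_apply, ContinuousLinearMap.one_apply]
    exact hx
  · intro y
    obtain ⟨x, hx⟩ := key (-μ) (by simp [ne_of_gt hμpos]) (by rw [abs_neg, abs_of_pos hμpos]) y
    refine ⟨x, ?_⟩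
    rw [ContinuousLinearMap.smul_apply, ContinuousLinearMap.one_apply]
    rw [Complex.ofReal_neg] at hx
    exact hx

end BlockOpAux

namespace BlockOp

local notation "⟪" x ", " y "⟫" => @inner ℂ _ _ x y

variable {H : Type*} [NormedAddCommGroup H] [InnerProductSpace ℂ H] [CompleteSpace H]

open LinearPMap

lemma wext {x y : WithLp 2 (H × H)} (h1 : x.fst = y.fst) (h2 : x.snd = y.snd) : x = y :=
  WithLp.ofLp_injective 2 (Prod.ext h1 h2)

lemma norm_fst_le (x : WithLp 2 (H × H)) : ‖x.fst‖ ≤ ‖x‖ := by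
  have h := WithLp.prod_norm_sq_eq_of_L2 x
  have h2 : ‖x.fst‖ ^ 2 ≤ ‖x‖ ^ 2 := by rw [h]; nlinarith [sq_nonneg ‖x.snd‖]
  have h3 := Real.sqrt_le_sqrt h2
  rwa [Real.sqrt_sq (norm_nonneg _), Real.sqrt_sq (norm_nonneg _)] at h3

lemma norm_snd_le (x : WithLp 2 (H × H)) : ‖x.snd‖ ≤ ‖x‖ := by
  have h := WithLp.prod_norm_sq_eq_of_L2 x
  have h2 : ‖x.snd‖ ^ 2 ≤ ‖x‖ ^ 2 := by rw [h]; nlinarith [sq_nonneg ‖x.fst‖]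
  have h3 := Real.sqrt_le_sqrt h2
  rwa [Real.sqrt_sq (norm_nonneg _), Real.sqrt_sq (norm_nonneg _)] at h3

lemma norm_pair (x : WithLp 2 (H × H)) (hz : x.snd = 0) : ‖x‖ = ‖x.fst‖ := by
  have h := WithLp.prod_norm_sq_eq_of_L2 x
  rw [hz, norm_zero] at h
  have h1 : ‖x‖ ^ 2 = ‖x.fst‖ ^ 2 := by rw [h]; ring
  have h2 := congrArg Real.sqrt h1
  rwa [Real.sqrt_sq (norm_nonneg _), Real.sqrt_sq (norm_nonneg _)] at h2

lemma norm_pair' (x : WithLp 2 (H × H)) (hz : x.fst = 0) : ‖x‖ = ‖x.snd‖ := by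
  have h := WithLp.prod_norm_sq_eq_of_L2 x
  rw [hz, norm_zero] at h
  have h1 : ‖x‖ ^ 2 = ‖x.snd‖ ^ 2 := by rw [h]; ring
  have h2 := congrArg Real.sqrt h1
  rwa [Real.sqrt_sq (norm_nonneg _), Real.sqrt_sq (norm_nonneg _)] at h2

/-- The bounded symmetric off-diagonal operator `(x₁,x₂) ↦ (λ x₂, conj λ x₁)`. -/
noncomputable def offV (lam : ℂ) : WithLp 2 (H × H) →L[ℂ] WithLp 2 (H × H) :=
  LinearMap.mkContinuous
    { toFun := fun x => (WithLp.equiv 2 (H × H)).symm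
        (lam • x.snd, (starRingEnd ℂ) lam • x.fst)
      map_add' := by
        intro x y
        apply wext <;> simp [smul_add]
      map_smul' := by
        intro c x
        apply wext <;>
          simp [smul_comm c lam, smul_comm c ((starRingEnd ℂ) lam)] } ‖lam‖
    (by
      intro x
      have hfst : ((WithLp.equiv 2 (H × H)).symm
          (lam • x.snd, (starRingEnd ℂ) lam • x.fst)).fst = lam • x.snd := rfl
      have hsnd : ((WithLp.equiv 2 (H × H)).symm
          (lam • x.snd, (starRingEnd ℂ) lam • x.fst)).snd = (starRingEnd ℂ) lam • x.fst := rfl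
      have h := WithLp.prod_norm_sq_eq_of_L2 ((WithLp.equiv 2 (H × H)).symm
          (lam • x.snd, (starRingEnd ℂ) lam • x.fst))
      rw [hfst, hsnd] at h
      have hx := WithLp.prod_norm_sq_eq_of_L2 x
      have h1 : ‖(WithLp.equiv 2 (H × H)).symm
          (lam • x.snd, (starRingEnd ℂ) lam • x.fst)‖ ^ 2 = (‖lam‖ * ‖x‖) ^ 2 := by
        rw [h, norm_smul, norm_smul]
        have : ‖(starRingEnd ℂ) lam‖ = ‖lam‖ := by simp
        rw [this, mul_pow, mul_pow, mul_pow, hx]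
        ring
      have h2 := congrArg Real.sqrt h1
      rw [Real.sqrt_sq (norm_nonneg _), Real.sqrt_sq (by positivity)] at h2
      exact le_of_eq h2)

lemma offV_fst (lam : ℂ) (x : WithLp 2 (H × H)) : (offV lam x).fst = lam • x.snd := rfl
lemma offV_snd (lam : ℂ) (x : WithLp 2 (H × H)) :
    (offV lam x).snd = (starRingEnd ℂ) lam • x.fst := rfl

lemma offV_symm_pair (lam : ℂ) (u y : WithLp 2 (H × H)) :
    ⟪offV lam u, y⟫ = ⟪u, offV lam y⟫ := by
  rw [WithLp.prod_inner_apply, WithLp.prod_inner_apply]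
  simp only [WithLp.ofLp_fst, WithLp.ofLp_snd]
  rw [offV_fst, offV_snd,
    offV_fst, offV_snd, inner_smul_left, inner_smul_left, inner_smul_right,
    inner_smul_right, Complex.conj_conj]
  ring

section Resolvent

variable {B : H →ₗ.[ℂ] H} {lam : ℂ} {R : H →L[ℂ] H}

/-- The adjoint resolvent: membership. -/
theorem adjoint_res_mem (hR : IsResolventAt B lam R) (z : H) :
    (ContinuousLinearMap.adjoint R) z ∈ B.adjoint.domain := by
  apply mem_adjoint_domain_of_exists
  refine ⟨z + (starRingEnd ℂ) lam • (ContinuousLinearMap.adjoint R) z, ?_⟩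
  intro u
  have key : ⟪(ContinuousLinearMap.adjoint R) z, B u⟫
      = ⟪z, (u : H)⟫ + lam * ⟪(ContinuousLinearMap.adjoint R) z, (u : H)⟫ := by
    have h1 : (B u : H) = (B u - lam • (u : H)) + lam • (u : H) := by abel
    rw [h1, inner_add_right, inner_smul_right]
    congr 1
    rw [ContinuousLinearMap.adjoint_inner_left]
    rw [hR.left_inv u]
  rw [key, inner_add_left, inner_smul_left, Complex.conj_conj]

/-- The adjoint resolvent: value of `B†`. -/
theorem adjoint_res_apply (hBd : Dense (B.domain : Set H)) (hR : IsResolventAt B lam R) (z : H) :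
    B.adjoint ⟨(ContinuousLinearMap.adjoint R) z, adjoint_res_mem hR z⟩
      = z + (starRingEnd ℂ) lam • (ContinuousLinearMap.adjoint R) z := by
  apply adjoint_apply_eq hBd
  intro u
  have key : ⟪(ContinuousLinearMap.adjoint R) z, B u⟫
      = ⟪z, (u : H)⟫ + lam * ⟪(ContinuousLinearMap.adjoint R) z, (u : H)⟫ := by
    have h1 : (B u : H) = (B u - lam • (u : H)) + lam • (u : H) := by abel
    rw [h1, inner_add_right, inner_smul_right]
    congr 1
    rw [ContinuousLinearMap.adjoint_inner_left]
    rw [hR.left_inv u]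
  rw [key, inner_add_left, inner_smul_left, Complex.conj_conj]

/-- The adjoint resolvent: left inverse property. -/
theorem adjoint_res_left_inv (hBd : Dense (B.domain : Set H)) (hR : IsResolventAt B lam R)
    (x : B.adjoint.domain) :
    (ContinuousLinearMap.adjoint R)
      (B.adjoint x - (starRingEnd ℂ) lam • (x : H)) = (x : H) := by
  set w : H := B.adjoint x - (starRingEnd ℂ) lam • (x : H) with hw
  have key : ∀ v : H, ⟪v, (ContinuousLinearMap.adjoint R) w - (x : H)⟫ = 0 := by
    intro v
    rw [inner_sub_right, sub_eq_zero]
    have hv : B ⟨R v, hR.mem v⟩ - lam • (R v) = v := hR.right_inv v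
    have h1 : ⟪v, (ContinuousLinearMap.adjoint R) w⟫ = ⟪R v, w⟫ :=
      ContinuousLinearMap.adjoint_inner_right R v w
    rw [h1, hw, inner_sub_right, inner_smul_right]
    have h2 : ⟪R v, B.adjoint x⟫ = ⟪B ⟨R v, hR.mem v⟩, (x : H)⟫ := by
      rw [← inner_conj_symm, adjoint_isFormalAdjoint hBd x ⟨R v, hR.mem v⟩,
        inner_conj_symm]
    rw [h2]
    have h3 : ⟪B ⟨R v, hR.mem v⟩, (x : H)⟫ - (starRingEnd ℂ) lam * ⟪R v, (x : H)⟫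
        = ⟪B ⟨R v, hR.mem v⟩ - lam • R v, (x : H)⟫ := by
      rw [inner_sub_left, inner_smul_left]
    rw [h3, hv]
  have h0 := key ((ContinuousLinearMap.adjoint R) w - (x : H))
  rw [inner_self_eq_zero, sub_eq_zero] at h0
  exact h0

end Resolvent

section Symmetry

variable {A B D : H →ₗ.[ℂ] H}

/-- Symmetry of the block operator `[[A, B], [B†, D]]`. -/
theorem blockOpL_symm (hBd : Dense (B.domain : Set H))
    (hA : ∀ x y : A.domain, ⟪A x, (y : H)⟫ = ⟪(x : H), A y⟫)
    (hD : ∀ x y : D.domain, ⟪D x, (y : H)⟫ = ⟪(x : H), D y⟫)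
    (x y : (blockOpL A B B.adjoint D).domain) :
    ⟪blockOpL A B B.adjoint D x, (y : WithLp 2 (H × H))⟫
      = ⟪(x : WithLp 2 (H × H)), blockOpL A B B.adjoint D y⟫ := by
  obtain ⟨x, hx⟩ := x
  obtain ⟨y, hy⟩ := y
  have hx' : x.fst ∈ A.domain ⊓ B.adjoint.domain ∧ x.snd ∈ B.domain ⊓ D.domain := hx
  have hy' : y.fst ∈ A.domain ⊓ B.adjoint.domain ∧ y.snd ∈ B.domain ⊓ D.domain := hy
  have hxa : blockOpL A B B.adjoint D ⟨x, hx⟩ =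
      (WithLp.equiv 2 (H × H)).symm
        (A ⟨x.fst, hx'.1.1⟩ + B ⟨x.snd, hx'.2.1⟩,
         B.adjoint ⟨x.fst, hx'.1.2⟩ + D ⟨x.snd, hx'.2.2⟩) := rfl
  have hya : blockOpL A B B.adjoint D ⟨y, hy⟩ =
      (WithLp.equiv 2 (H × H)).symm
        (A ⟨y.fst, hy'.1.1⟩ + B ⟨y.snd, hy'.2.1⟩,
         B.adjoint ⟨y.fst, hy'.1.2⟩ + D ⟨y.snd, hy'.2.2⟩) := rfl
  rw [hxa, hya, WithLp.prod_inner_apply, WithLp.prod_inner_apply]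
  have e1 : ((WithLp.equiv 2 (H × H)).symm
      (A ⟨x.fst, hx'.1.1⟩ + B ⟨x.snd, hx'.2.1⟩,
       B.adjoint ⟨x.fst, hx'.1.2⟩ + D ⟨x.snd, hx'.2.2⟩)).fst
      = A ⟨x.fst, hx'.1.1⟩ + B ⟨x.snd, hx'.2.1⟩ := rfl
  have e2 : ((WithLp.equiv 2 (H × H)).symm
      (A ⟨x.fst, hx'.1.1⟩ + B ⟨x.snd, hx'.2.1⟩,
       B.adjoint ⟨x.fst, hx'.1.2⟩ + D ⟨x.snd, hx'.2.2⟩)).snd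
      = B.adjoint ⟨x.fst, hx'.1.2⟩ + D ⟨x.snd, hx'.2.2⟩ := rfl
  have e3 : ((WithLp.equiv 2 (H × H)).symm
      (A ⟨y.fst, hy'.1.1⟩ + B ⟨y.snd, hy'.2.1⟩,
       B.adjoint ⟨y.fst, hy'.1.2⟩ + D ⟨y.snd, hy'.2.2⟩)).fst
      = A ⟨y.fst, hy'.1.1⟩ + B ⟨y.snd, hy'.2.1⟩ := rfl
  have e4 : ((WithLp.equiv 2 (H × H)).symm
      (A ⟨y.fst, hy'.1.1⟩ + B ⟨y.snd, hy'.2.1⟩,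
       B.adjoint ⟨y.fst, hy'.1.2⟩ + D ⟨y.snd, hy'.2.2⟩)).snd
      = B.adjoint ⟨y.fst, hy'.1.2⟩ + D ⟨y.snd, hy'.2.2⟩ := rfl
  simp only [WithLp.ofLp_fst, WithLp.ofLp_snd]
  rw [e1, e2, e3, e4]
  have hBf : ∀ (u : B.adjoint.domain) (v : B.domain),
      ⟪B.adjoint u, (v : H)⟫ = ⟪(u : H), B v⟫ := adjoint_isFormalAdjoint hBd
  have hBf2 : ∀ (u : B.domain) (v : B.adjoint.domain),
      ⟪B u, (v : H)⟫ = ⟪(u : H), B.adjoint v⟫ := by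
    intro u v
    rw [← inner_conj_symm, ← hBf v u, inner_conj_symm]
  rw [inner_add_left, inner_add_left, inner_add_right, inner_add_right]
  rw [hA ⟨x.fst, hx'.1.1⟩ ⟨y.fst, hy'.1.1⟩, hD ⟨x.snd, hx'.2.2⟩ ⟨y.snd, hy'.2.2⟩]
  rw [hBf2 ⟨x.snd, hx'.2.1⟩ ⟨y.fst, hy'.1.2⟩, hBf ⟨x.fst, hx'.1.2⟩ ⟨y.snd, hy'.2.1⟩]
  ring

end Symmetry

end BlockOp

namespace BlockOp

open BlockOpAux

local notation "⟪" x ", " y "⟫" => @inner ℂ _ _ x y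

theorem statement19 {H : Type*} [NormedAddCommGroup H] [InnerProductSpace ℂ H] [CompleteSpace H]
    (A B D : H →ₗ.[ℂ] H)
    (hAd : Dense (A.domain : Set H)) (hBd : Dense (B.domain : Set H))
    (hBad : Dense (B.adjoint.domain : Set H)) (hDd : Dense (D.domain : Set H))
    (hAc : A.IsClosable) (hBc : B.IsClosable) (hBac : B.adjoint.IsClosable)
    (hDc : D.IsClosable)
    (hAsym : A ≤ A.adjoint) (hBsym : B ≤ B.adjoint.adjoint) (hDsym : D ≤ D.adjoint)
    (hdense : Dense ((blockOpL A B B.adjoint D).domain : Set (WithLp 2 (H × H))))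
    (hBclosed : B.IsClosed) (hres : (resolventSet B).Nonempty)
    (hBA : B.adjoint.domain ≤ A.domain) (hBD : B.domain ≤ D.domain)
    (h : IsRelBoundedLe A B.adjoint 0 ∨ IsRelBoundedLe D B 0) :
    IsSelfAdjoint (blockOpL A B B.adjoint D) := by
  obtain ⟨lam, R, hR⟩ := hres
  set R' := ContinuousLinearMap.adjoint R with hR'
  have hpairA : ∀ x y : A.domain, ⟪A x, (y : H)⟫ = ⟪(x : H), A y⟫ :=
    symm_of_le_adjoint hAd hAsym
  have hpairD : ∀ x y : D.domain, ⟪D x, (y : H)⟫ = ⟪(x : H), D y⟫ :=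
    symm_of_le_adjoint hDd hDsym
  set Z : H →ₗ.[ℂ] H := (0 : H →ₗ[ℂ] H).toPMap ⊤ with hZ
  have hZdom : Z.domain = ⊤ := rfl
  have hZapply : ∀ x : Z.domain, Z x = 0 := fun x => rfl
  have hpairZ : ∀ x y : Z.domain, ⟪Z x, (y : H)⟫ = ⟪(x : H), Z y⟫ := by
    intro x y
    rw [hZapply x, hZapply y, inner_zero_left, inner_zero_right]
  rw [LinearPMap.isSelfAdjoint_def]
  rcases h with hrel | hrel
  · -- case (a) : A is B†-bounded with relative bound 0
    set T : WithLp 2 (H × H) →ₗ.[ℂ] WithLp 2 (H × H) := blockOpL Z B B.adjoint D with hT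
    have hdomeq : (blockOpL A B B.adjoint D).domain = T.domain := by
      show Submodule.comap _ ((A.domain ⊓ B.adjoint.domain).prod (B.domain ⊓ D.domain)) =
        Submodule.comap _ ((Z.domain ⊓ B.adjoint.domain).prod (B.domain ⊓ D.domain))
      rw [inf_eq_right.mpr hBA, hZdom, top_inf_eq]
    have hTd : Dense (T.domain : Set (WithLp 2 (H × H))) := hdomeq ▸ hdense
    have hTsym := blockOpL_symm (A := Z) (D := D) hBd hpairZ hpairD
    have hsurj : ∀ y : WithLp 2 (H × H), ∃ x : T.domain, T x - offV lam x = y := by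
      intro y
      have hx₂B : R y.fst ∈ B.domain := hR.mem y.fst
      have hx₂D : R y.fst ∈ D.domain := hBD hx₂B
      set z : H := y.snd - D ⟨R y.fst, hx₂D⟩ with hz
      have hx₁ : R' z ∈ B.adjoint.domain := adjoint_res_mem hR z
      set x : WithLp 2 (H × H) := (WithLp.equiv 2 (H × H)).symm (R' z, R y.fst) with hxdef
      have hxmem : x ∈ T.domain := ⟨⟨Submodule.mem_top, hx₁⟩, hx₂B, hx₂D⟩
      refine ⟨⟨x, hxmem⟩, ?_⟩
      apply wext
      · show Z ⟨R' z, Submodule.mem_top⟩ + B ⟨R y.fst, hx₂B⟩ - lam • (R y.fst) = y.fst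
        rw [hZapply, zero_add]
        exact hR.right_inv y.fst
      · show B.adjoint ⟨R' z, hx₁⟩ + D ⟨R y.fst, hx₂D⟩ - (starRingEnd ℂ) lam • (R' z) = y.snd
        rw [adjoint_res_apply hBd hR z, hz]
        abel
    have hTsa : T.adjoint = T :=
      adjoint_eq_of_symm_surj T hTd hTsym (offV lam) (offV lam)
        (fun u y => offV_symm_pair lam u y) hsurj hsurj
    obtain ⟨C, hC0, hCb⟩ := exists_relBound B D hBclosed hDc hBD
    have hCpos : (0:ℝ) < 1 + C := by linarith
    set ε : ℝ := 1 / (2 * (1 + C)) with hε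
    have hεpos : 0 < ε := by positivity
    obtain ⟨a, ha0, hrb⟩ := hrel ε hεpos
    have hεC : ε * (1 + C) = 1/2 := by
      have h0 : (1 + C) ≠ 0 := ne_of_gt hCpos
      rw [hε]
      field_simp
    have hbound : ∀ x : T.domain,
        ‖blockOpL A B B.adjoint D ⟨(x : WithLp 2 (H × H)), hdomeq.symm.le x.2⟩ - T x‖
          ≤ (a + ε * C) * ‖(x : WithLp 2 (H × H))‖ + (1/2 : ℝ) * ‖T x‖ := by
      rintro ⟨x, hx⟩
      have hx' : (x.fst ∈ Z.domain ⊓ B.adjoint.domain) ∧ x.snd ∈ B.domain ⊓ D.domain := hx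
      have hxA : x.fst ∈ A.domain := hBA hx'.1.2
      set w := blockOpL A B B.adjoint D ⟨x, hdomeq.symm.le hx⟩ - T ⟨x, hx⟩ with hw
      have hwfst : w.fst = A ⟨x.fst, hxA⟩ := by
        show (A ⟨x.fst, hxA⟩ + B ⟨x.snd, hx'.2.1⟩) -
          (Z ⟨x.fst, hx'.1.1⟩ + B ⟨x.snd, hx'.2.1⟩) = A ⟨x.fst, hxA⟩
        rw [hZapply, zero_add, add_sub_cancel_right]
      have hwsnd : w.snd = 0 := by
        show (B.adjoint ⟨x.fst, hx'.1.2⟩ + D ⟨x.snd, hx'.2.2⟩) -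
          (B.adjoint ⟨x.fst, hx'.1.2⟩ + D ⟨x.snd, hx'.2.2⟩) = 0
        exact sub_self _
      have hnw : ‖w‖ = ‖A ⟨x.fst, hxA⟩‖ := by rw [norm_pair w hwsnd, hwfst]
      have h1 : ‖A ⟨x.fst, hxA⟩‖ ≤ a * ‖x.fst‖ + ε * ‖B.adjoint ⟨x.fst, hx'.1.2⟩‖ :=
        hrb.bound ⟨x.fst, hx'.1.2⟩
      have h2 : ‖D ⟨x.snd, hx'.2.2⟩‖ ≤ C * ‖x.snd‖ + C * ‖B ⟨x.snd, hx'.2.1⟩‖ :=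
        hCb ⟨x.snd, hx'.2.1⟩
      have hBfst : (T ⟨x, hx⟩).fst = B ⟨x.snd, hx'.2.1⟩ := by
        show Z ⟨x.fst, hx'.1.1⟩ + B ⟨x.snd, hx'.2.1⟩ = _
        rw [hZapply, zero_add]
      have hBle : ‖B ⟨x.snd, hx'.2.1⟩‖ ≤ ‖T ⟨x, hx⟩‖ := by
        rw [← hBfst]; exact norm_fst_le _
      have hsndle : ‖(T ⟨x, hx⟩).snd‖ ≤ ‖T ⟨x, hx⟩‖ := norm_snd_le _
      have hBadj : ‖B.adjoint ⟨x.fst, hx'.1.2⟩‖ ≤ ‖T ⟨x, hx⟩‖ + ‖D ⟨x.snd, hx'.2.2⟩‖ := by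
        have heq : B.adjoint ⟨x.fst, hx'.1.2⟩ = (T ⟨x, hx⟩).snd - D ⟨x.snd, hx'.2.2⟩ := by
          show _ = (B.adjoint ⟨x.fst, hx'.1.2⟩ + D ⟨x.snd, hx'.2.2⟩) - D ⟨x.snd, hx'.2.2⟩
          rw [add_sub_cancel_right]
        rw [heq]
        calc ‖(T ⟨x, hx⟩).snd - D ⟨x.snd, hx'.2.2⟩‖
            ≤ ‖(T ⟨x, hx⟩).snd‖ + ‖D ⟨x.snd, hx'.2.2⟩‖ := norm_sub_le _ _
          _ ≤ ‖T ⟨x, hx⟩‖ + ‖D ⟨x.snd, hx'.2.2⟩‖ := by linarith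
      have hx1le : ‖x.fst‖ ≤ ‖x‖ := norm_fst_le x
      have hx2le : ‖x.snd‖ ≤ ‖x‖ := norm_snd_le x
      have hDle : ‖D ⟨x.snd, hx'.2.2⟩‖ ≤ C * ‖x‖ + C * ‖T ⟨x, hx⟩‖ := by
        calc ‖D ⟨x.snd, hx'.2.2⟩‖ ≤ C * ‖x.snd‖ + C * ‖B ⟨x.snd, hx'.2.1⟩‖ := h2
          _ ≤ C * ‖x‖ + C * ‖T ⟨x, hx⟩‖ := by gcongr
      show ‖w‖ ≤ _
      rw [hnw]
      calc ‖A ⟨x.fst, hxA⟩‖ ≤ a * ‖x.fst‖ + ε * ‖B.adjoint ⟨x.fst, hx'.1.2⟩‖ := h1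
        _ ≤ a * ‖x‖ + ε * (‖T ⟨x, hx⟩‖ + (C * ‖x‖ + C * ‖T ⟨x, hx⟩‖)) := by
            gcongr
            calc ‖B.adjoint ⟨x.fst, hx'.1.2⟩‖ ≤ ‖T ⟨x, hx⟩‖ + ‖D ⟨x.snd, hx'.2.2⟩‖ := hBadj
              _ ≤ ‖T ⟨x, hx⟩‖ + (C * ‖x‖ + C * ‖T ⟨x, hx⟩‖) := by linarith
        _ = (a + ε * C) * ‖x‖ + (ε * (1 + C)) * ‖T ⟨x, hx⟩‖ := by ring
        _ = (a + ε * C) * ‖x‖ + (1/2 : ℝ) * ‖T ⟨x, hx⟩‖ := by rw [hεC]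
    exact adjoint_eq_of_perturbation T (blockOpL A B B.adjoint D) hTsa hdomeq hdense
      (blockOpL_symm hBd hpairA hpairD) (a + ε * C) (1/2)
      (add_nonneg ha0 (mul_nonneg hεpos.le hC0)) (by norm_num) (by norm_num) hbound
  · -- case (b) : D is B-bounded with relative bound 0
    set T : WithLp 2 (H × H) →ₗ.[ℂ] WithLp 2 (H × H) := blockOpL A B B.adjoint Z with hT
    have hdomeq : (blockOpL A B B.adjoint D).domain = T.domain := by
      show Submodule.comap _ ((A.domain ⊓ B.adjoint.domain).prod (B.domain ⊓ D.domain)) =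
        Submodule.comap _ ((A.domain ⊓ B.adjoint.domain).prod (B.domain ⊓ Z.domain))
      rw [inf_eq_left.mpr hBD, hZdom, inf_top_eq]
    have hTd : Dense (T.domain : Set (WithLp 2 (H × H))) := hdomeq ▸ hdense
    have hTsym := blockOpL_symm (A := A) (D := Z) hBd hpairA hpairZ
    have hsurj : ∀ y : WithLp 2 (H × H), ∃ x : T.domain, T x - offV lam x = y := by
      intro y
      have hx₁ : R' y.snd ∈ B.adjoint.domain := adjoint_res_mem hR y.snd
      have hx₁A : R' y.snd ∈ A.domain := hBA hx₁
      set z : H := y.fst - A ⟨R' y.snd, hx₁A⟩ with hz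
      have hx₂B : R z ∈ B.domain := hR.mem z
      set x : WithLp 2 (H × H) := (WithLp.equiv 2 (H × H)).symm (R' y.snd, R z) with hxdef
      have hxmem : x ∈ T.domain := ⟨⟨hx₁A, hx₁⟩, hx₂B, Submodule.mem_top⟩
      refine ⟨⟨x, hxmem⟩, ?_⟩
      apply wext
      · show A ⟨R' y.snd, hx₁A⟩ + B ⟨R z, hx₂B⟩ - lam • (R z) = y.fst
        rw [add_sub_assoc, hR.right_inv z, hz]
        abel
      · show B.adjoint ⟨R' y.snd, hx₁⟩ + Z ⟨R z, Submodule.mem_top⟩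
            - (starRingEnd ℂ) lam • (R' y.snd) = y.snd
        rw [hZapply, add_zero, adjoint_res_apply hBd hR y.snd]
        abel
    have hTsa : T.adjoint = T :=
      adjoint_eq_of_symm_surj T hTd hTsym (offV lam) (offV lam)
        (fun u y => offV_symm_pair lam u y) hsurj hsurj
    obtain ⟨C, hC0, hCb⟩ := exists_relBound B.adjoint A (adjoint_isClosed B hBd) hAc hBA
    have hCpos : (0:ℝ) < 1 + C := by linarith
    set ε : ℝ := 1 / (2 * (1 + C)) with hε
    have hεpos : 0 < ε := by positivity
    obtain ⟨a, ha0, hrb⟩ := hrel ε hεpos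
    have hεC : ε * (1 + C) = 1/2 := by
      have h0 : (1 + C) ≠ 0 := ne_of_gt hCpos
      rw [hε]
      field_simp
    have hbound : ∀ x : T.domain,
        ‖blockOpL A B B.adjoint D ⟨(x : WithLp 2 (H × H)), hdomeq.symm.le x.2⟩ - T x‖
          ≤ (a + ε * C) * ‖(x : WithLp 2 (H × H))‖ + (1/2 : ℝ) * ‖T x‖ := by
      rintro ⟨x, hx⟩
      have hx' : (x.fst ∈ A.domain ⊓ B.adjoint.domain) ∧ x.snd ∈ B.domain ⊓ Z.domain := hx
      have hxD : x.snd ∈ D.domain := hBD hx'.2.1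
      set w := blockOpL A B B.adjoint D ⟨x, hdomeq.symm.le hx⟩ - T ⟨x, hx⟩ with hw
      have hwfst : w.fst = 0 := by
        show (A ⟨x.fst, hx'.1.1⟩ + B ⟨x.snd, hx'.2.1⟩) -
          (A ⟨x.fst, hx'.1.1⟩ + B ⟨x.snd, hx'.2.1⟩) = 0
        exact sub_self _
      have hwsnd : w.snd = D ⟨x.snd, hxD⟩ := by
        show (B.adjoint ⟨x.fst, hx'.1.2⟩ + D ⟨x.snd, hxD⟩) -
          (B.adjoint ⟨x.fst, hx'.1.2⟩ + Z ⟨x.snd, hx'.2.2⟩) = D ⟨x.snd, hxD⟩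
        rw [hZapply, add_zero, add_sub_cancel_left]
      have hnw : ‖w‖ = ‖D ⟨x.snd, hxD⟩‖ := by rw [norm_pair' w hwfst, hwsnd]
      have h1 : ‖D ⟨x.snd, hxD⟩‖ ≤ a * ‖x.snd‖ + ε * ‖B ⟨x.snd, hx'.2.1⟩‖ :=
        hrb.bound ⟨x.snd, hx'.2.1⟩
      have h2 : ‖A ⟨x.fst, hx'.1.1⟩‖ ≤ C * ‖x.fst‖ + C * ‖B.adjoint ⟨x.fst, hx'.1.2⟩‖ :=
        hCb ⟨x.fst, hx'.1.2⟩
      have hBadjsnd : (T ⟨x, hx⟩).snd = B.adjoint ⟨x.fst, hx'.1.2⟩ := by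
        show B.adjoint ⟨x.fst, hx'.1.2⟩ + Z ⟨x.snd, hx'.2.2⟩ = _
        rw [hZapply, add_zero]
      have hBadjle : ‖B.adjoint ⟨x.fst, hx'.1.2⟩‖ ≤ ‖T ⟨x, hx⟩‖ := by
        rw [← hBadjsnd]; exact norm_snd_le _
      have hfstle : ‖(T ⟨x, hx⟩).fst‖ ≤ ‖T ⟨x, hx⟩‖ := norm_fst_le _
      have hBle : ‖B ⟨x.snd, hx'.2.1⟩‖ ≤ ‖T ⟨x, hx⟩‖ + ‖A ⟨x.fst, hx'.1.1⟩‖ := by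
        have heq : B ⟨x.snd, hx'.2.1⟩ = (T ⟨x, hx⟩).fst - A ⟨x.fst, hx'.1.1⟩ := by
          show _ = (A ⟨x.fst, hx'.1.1⟩ + B ⟨x.snd, hx'.2.1⟩) - A ⟨x.fst, hx'.1.1⟩
          rw [add_sub_cancel_left]
        rw [heq]
        calc ‖(T ⟨x, hx⟩).fst - A ⟨x.fst, hx'.1.1⟩‖
            ≤ ‖(T ⟨x, hx⟩).fst‖ + ‖A ⟨x.fst, hx'.1.1⟩‖ := norm_sub_le _ _
          _ ≤ ‖T ⟨x, hx⟩‖ + ‖A ⟨x.fst, hx'.1.1⟩‖ := by linarith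
      have hx1le : ‖x.fst‖ ≤ ‖x‖ := norm_fst_le x
      have hx2le : ‖x.snd‖ ≤ ‖x‖ := norm_snd_le x
      have hAle : ‖A ⟨x.fst, hx'.1.1⟩‖ ≤ C * ‖x‖ + C * ‖T ⟨x, hx⟩‖ := by
        calc ‖A ⟨x.fst, hx'.1.1⟩‖
            ≤ C * ‖x.fst‖ + C * ‖B.adjoint ⟨x.fst, hx'.1.2⟩‖ := h2
          _ ≤ C * ‖x‖ + C * ‖T ⟨x, hx⟩‖ := by gcongr
      show ‖w‖ ≤ _
      rw [hnw]
      calc ‖D ⟨x.snd, hxD⟩‖ ≤ a * ‖x.snd‖ + ε * ‖B ⟨x.snd, hx'.2.1⟩‖ := h1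
        _ ≤ a * ‖x‖ + ε * (‖T ⟨x, hx⟩‖ + (C * ‖x‖ + C * ‖T ⟨x, hx⟩‖)) := by
            gcongr
            calc ‖B ⟨x.snd, hx'.2.1⟩‖ ≤ ‖T ⟨x, hx⟩‖ + ‖A ⟨x.fst, hx'.1.1⟩‖ := hBle
              _ ≤ ‖T ⟨x, hx⟩‖ + (C * ‖x‖ + C * ‖T ⟨x, hx⟩‖) := by linarith
        _ = (a + ε * C) * ‖x‖ + (ε * (1 + C)) * ‖T ⟨x, hx⟩‖ := by ring
        _ = (a + ε * C) * ‖x‖ + (1/2 : ℝ) * ‖T ⟨x, hx⟩‖ := by rw [hεC]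
    exact adjoint_eq_of_perturbation T (blockOpL A B B.adjoint D) hTsa hdomeq hdense
      (blockOpL_symm hBd hpairA hpairD) (a + ε * C) (1/2)
      (add_nonneg ha0 (mul_nonneg hεpos.le hC0)) (by norm_num) (by norm_num) hbound

end BlockOp
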